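/- Let b ≥ 0, ρ > 0, y* > 0, p ∈ ℝ, B(y) = p − b·(y − y*), D⁺(y) = p + (y − y*)/ρ, and y_A = ((1 + bρ)/(2 + bρ))·y*. Define the surplus without the fast trader γ*(y) = ∫₀ʸ (B(u) − D⁺(u)) du, the surplus with the fast trader γ_A(y) = ∫₀ʸ B(u) du − y·D⁺(y), and the fast trader's profit π_A = y_A·D⁺(y_A) − ∫₀^{y_A} D⁺(u) du. Then the deadweight loss introduced by the fast trader satisfies γ*(y*) − γ_A(y_A) − π_A = ∫_{y_A}^{y*} (B(u) − D⁺(u)) du = (b + 1/ρ)·(y* − y_A)²/2 = (b + 1/ρ)·(y*)²/(2·(2 + bρ)²). -/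

import Mathlib

lemma affine_int (A C a c : ℝ) :
    ∫ u in a..c, (A + C * u) = A * (c - a) + C * (c ^ 2 - a ^ 2) / 2 := by
  rw [intervalIntegral.integral_add intervalIntegrable_const
      (((continuous_mul_left C).intervalIntegrable a c)),
    intervalIntegral.integral_const_mul, integral_id, intervalIntegral.integral_const, smul_eq_mul]
  ring

/-- Deadweight loss introduced by the fast trader:
`γ*(y*) − γ_A(y_A) − π_A = ∫_{y_A}..(y*) (B − D⁺) = (b + 1/ρ)·(y* − y_A)²/2
  = (b + 1/ρ)·(y*)²/(2·(2+bρ)²)`. -/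
theorem stmt_14 (b ρ ystar p : ℝ) (hb : 0 ≤ b) (hρ : 0 < ρ) (hystar : 0 < ystar)
    (B Dp γstar γA : ℝ → ℝ) (yA πA : ℝ)
    (hB : ∀ y, B y = p - b * (y - ystar))
    (hD : ∀ y, Dp y = p + (y - ystar) / ρ)
    (hyA : yA = ((1 + b * ρ) / (2 + b * ρ)) * ystar)
    (hγstar : ∀ y, γstar y = ∫ u in (0:ℝ)..y, (B u - Dp u))
    (hγA : ∀ y, γA y = (∫ u in (0:ℝ)..y, B u) - y * Dp y)
    (hπA : πA = yA * Dp yA - ∫ u in (0:ℝ)..yA, Dp u) :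
    γstar ystar - γA yA - πA = (∫ u in yA..ystar, (B u - Dp u)) ∧
      γstar ystar - γA yA - πA = (b + 1 / ρ) * (ystar - yA) ^ 2 / 2 ∧
      γstar ystar - γA yA - πA = (b + 1 / ρ) * ystar ^ 2 / (2 * (2 + b * ρ) ^ 2) := by
  have hρ' := hρ.ne'
  have h2 : (2 + b * ρ) ≠ 0 := by positivity
  have hBD : ∀ a c : ℝ, (∫ u in a..c, (B u - Dp u)) =
      ((p + b * ystar + ystar / ρ - p) * (c - a) + (-(b + 1 / ρ)) * (c ^ 2 - a ^ 2) / 2) := by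
    intro a c
    have : ∀ u, B u - Dp u = (p + b * ystar + ystar / ρ - p) + (-(b + 1 / ρ)) * u := by
      intro u; rw [hB, hD]; field_simp; ring
    simp only [this]; exact affine_int _ _ _ _
  have hBi : (∫ u in (0:ℝ)..yA, B u) =
      (p + b * ystar) * (yA - 0) + (-b) * (yA ^ 2 - 0 ^ 2) / 2 := by
    have : ∀ u, B u = (p + b * ystar) + (-b) * u := by intro u; rw [hB]; ring
    simp only [this]; exact affine_int _ _ _ _
  have hDi : (∫ u in (0:ℝ)..yA, Dp u) =
      (p - ystar / ρ) * (yA - 0) + (1 / ρ) * (yA ^ 2 - 0 ^ 2) / 2 := by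
    have : ∀ u, Dp u = (p - ystar / ρ) + (1 / ρ) * u := by
      intro u; rw [hD]; field_simp; ring
    simp only [this]; exact affine_int _ _ _ _
  have hmain : γstar ystar - γA yA - πA = (b + 1 / ρ) * (ystar - yA) ^ 2 / 2 := by
    rw [hγstar, hγA, hπA, hBD, hBi, hDi, hD]
    field_simp
    ring
  refine ⟨?_, hmain, ?_⟩
  · rw [hmain, hBD]; ring
  · rw [hmain, hyA]; field_simp; ring
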